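/- Let n ≥ 4 be even. Then the f-polynomials satisfy the polynomial identity P_{n+1}(x) = (1 + x) · P_n(x). -/

import Mathlib

set_option linter.unreachableTactic false
set_option linter.unusedTactic false
set_option linter.unnecessarySeqFocus false



open Finset Polynomial

/-- `σ` is a permutation of `[n] = {1, …, n}` (viewed as a function `ℕ → ℕ`
restricted to a bijection of `{1, …, n}` onto itself). -/
def IsPermOn (n : ℕ) (σ : ℕ → ℕ) : Prop :=
  Set.BijOn σ (Set.Icc 1 n) (Set.Icc 1 n)

/-- The circular peak set of `σ` (as a permutation of `[n]`):
`CP(σ) = {σ(i) : 2 ≤ i ≤ n−1, σ(i−1) < σ(i) > σ(i+1)}`. -/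
def CP (n : ℕ) (σ : ℕ → ℕ) : Finset ℕ :=
  ((Finset.Icc 2 (n - 1)).filter (fun i => σ (i - 1) < σ i ∧ σ (i + 1) < σ i)).image σ

open scoped Classical in
/-- `Pn n` is the collection of all subsets `S ⊆ [n]` arising as the circular peak
set of some permutation of `[n]`. -/
noncomputable def Pn (n : ℕ) : Finset (Finset ℕ) :=
  (Finset.Icc 1 n).powerset.filter (fun S => ∃ σ : ℕ → ℕ, IsPermOn n σ ∧ CP n σ = S)

/-- `pcount n k` is the number of members of `Pn n` of cardinality `k`;
in the paper's notation, `p_{n,i} = pcount n (i+1)`. -/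
noncomputable def pcount (n k : ℕ) : ℕ :=
  ((Pn n).filter (fun S => S.card = k)).card

/-- The f-polynomial `P_n(x) = Σ_{i=0}^{⌊(n−1)/2⌋} p_{n,i−1} x^{⌊(n−1)/2⌋−i}`. -/
noncomputable def fpoly (n : ℕ) : Polynomial ℚ :=
  ∑ i ∈ Finset.range ((n - 1) / 2 + 1),
    Polynomial.C (pcount n i : ℚ) * Polynomial.X ^ ((n - 1) / 2 - i)

/-- Theorem 3.4 (even case): for even `n ≥ 4`, `P_{n+1}(x) = (1 + x)·P_n(x)`. -/
def GoodCond (S : Finset ℕ) : Prop := ∀ t ∈ S, 2 * (S.filter (· ≤ t)).card < t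


lemma sorted_getElem_lt {l : List ℕ} (hs : l.Pairwise (· < ·)) {a b : ℕ}
    (hab : a < b) (hb : b < l.length) : l[a]'(lt_trans hab hb) < l[b] :=
  hs.rel_get_of_lt (a := ⟨a, lt_trans hab hb⟩) (b := ⟨b, hb⟩) (Fin.mk_lt_mk.mpr hab)

lemma sorted_getElem_le {l : List ℕ} (hs : l.Pairwise (· < ·)) {a b : ℕ}
    (hab : a ≤ b) (hb : b < l.length) : l[a]'(lt_of_le_of_lt hab hb) ≤ l[b] := by
  rcases Nat.eq_or_lt_of_le hab with h | h
  · subst h; exact le_refl _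
  · exact le_of_lt (sorted_getElem_lt hs h hb)

lemma H2 {l : List ℕ} (hs : l.Pairwise (· < ·)) {m : ℕ} (hm : m < l.length) {t : ℕ}
    (ht : t ≤ l.getD m 0) : (l.toFinset.filter (· < t)).card ≤ m := by
  classical
  have hsub : l.toFinset.filter (· < t) ⊆ (l.take m).toFinset := by
    intro x hx
    rw [Finset.mem_filter, List.mem_toFinset] at hx
    obtain ⟨i, hi, rfl⟩ := List.getElem_of_mem hx.1
    have him : i < m := by
      by_contra hge
      push_neg at hge
      have hle : l.getD m 0 ≤ l[i] := by
        rw [List.getD_eq_getElem l 0 hm]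
        exact sorted_getElem_le hs hge hi
      omega
    rw [List.mem_toFinset]
    have : (l.take m)[i]'(by rw [List.length_take]; omega) = l[i] := List.getElem_take ..
    rw [← this]
    exact List.getElem_mem _
  calc (l.toFinset.filter (· < t)).card ≤ (l.take m).toFinset.card := Finset.card_le_card hsub
    _ ≤ (l.take m).length := List.toFinset_card_le _
    _ ≤ m := by rw [List.length_take]; omega

lemma H3 {l : List ℕ} (hs : l.Pairwise (· < ·)) {m : ℕ} (hm : m < l.length) :
    (l.toFinset.filter (· ≤ l.getD m 0)).card = m + 1 := by
  classical
  have heq : l.toFinset.filter (· ≤ l.getD m 0) = (l.take (m+1)).toFinset := by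
    ext x
    rw [Finset.mem_filter, List.mem_toFinset, List.mem_toFinset]
    constructor
    · rintro ⟨hx, hle⟩
      obtain ⟨i, hi, rfl⟩ := List.getElem_of_mem hx
      have him : i < m + 1 := by
        by_contra hge
        push_neg at hge
        have : l.getD m 0 < l[i] := by
          rw [List.getD_eq_getElem l 0 hm]
          exact sorted_getElem_lt hs (by omega) hi
        omega
      have : (l.take (m+1))[i]'(by rw [List.length_take]; omega) = l[i] := List.getElem_take ..
      rw [← this]
      exact List.getElem_mem _
    · intro hx
      obtain ⟨i, hi, rfl⟩ := List.getElem_of_mem hx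
      rw [List.length_take] at hi
      have hi' : i < l.length := by omega
      have hval : (l.take (m+1))[i] = l[i] := List.getElem_take ..
      refine ⟨by rw [hval]; exact List.getElem_mem _, ?_⟩
      rw [hval, List.getD_eq_getElem l 0 hm]
      exact sorted_getElem_le hs (by omega) hm
  rw [heq, List.toFinset_card_of_nodup, List.length_take]
  · omega
  · exact (hs.sublist (List.take_sublist _ _)).nodup

lemma count_lt {n : ℕ} {S : Finset ℕ} (hS : S ⊆ Finset.Icc 1 n) {t : ℕ} (ht : t ∈ S) :
    ((Finset.Icc 1 n \ S).filter (· < t)).card = t - (S.filter (· ≤ t)).card := by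
  classical
  have h1t : 1 ≤ t ∧ t ≤ n := Finset.mem_Icc.1 (hS ht)
  have hd : (Finset.Icc 1 n \ S).filter (· < t)
      = (Finset.Icc 1 n).filter (· < t) \ S.filter (· < t) := by
    ext x
    simp only [Finset.mem_filter, Finset.mem_sdiff]
    tauto
  have hIcc : (Finset.Icc 1 n).filter (· < t) = Finset.Icc 1 (t-1) := by
    ext x
    simp only [Finset.mem_filter, Finset.mem_Icc]
    omega
  have hins : S.filter (· ≤ t) = insert t (S.filter (· < t)) := by
    ext x
    simp only [Finset.mem_filter, Finset.mem_insert]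
    constructor
    · rintro ⟨hx, hle⟩
      rcases eq_or_lt_of_le hle with h | h
      · exact Or.inl h
      · exact Or.inr ⟨hx, h⟩
    · rintro (rfl | ⟨hx, hlt⟩)
      · exact ⟨ht, le_refl _⟩
      · exact ⟨hx, le_of_lt hlt⟩
  have hnotmem : t ∉ S.filter (· < t) := by simp
  have hcardins : (S.filter (· ≤ t)).card = (S.filter (· < t)).card + 1 := by
    rw [hins, Finset.card_insert_of_notMem hnotmem]
  have hsub : S.filter (· < t) ⊆ (Finset.Icc 1 n).filter (· < t) :=
    Finset.filter_subset_filter _ hS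
  have hcard := Finset.card_le_card hsub
  rw [hd, Finset.card_sdiff_of_subset hsub, hIcc] at *
  rw [Nat.card_Icc] at *
  omega

lemma lc_length {n : ℕ} {S : Finset ℕ} (hS : S ⊆ Finset.Icc 1 n) :
    ((Finset.Icc 1 n \ S).sort (· ≤ ·)).length = n - S.card := by
  rw [Finset.length_sort, Finset.card_sdiff_of_subset hS, Nat.card_Icc]; omega

lemma key_facts {n : ℕ} {S : Finset ℕ} (hS : S ⊆ Finset.Icc 1 n) (hg : GoodCond S) {jj : ℕ}
    (hjj : jj < S.card) :
    jj + 2 ≤ n - S.card ∧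
    ∀ m ≤ jj + 1, ((Finset.Icc 1 n \ S).sort (· ≤ ·)).getD m 0 < (S.sort (· ≤ ·)).getD jj 0 := by
  classical
  set ls := S.sort (· ≤ ·) with hls
  set lc := (Finset.Icc 1 n \ S).sort (· ≤ ·) with hlc
  have hlsl : ls.length = S.card := Finset.length_sort _
  have hlcl : lc.length = n - S.card := lc_length hS
  have hjj' : jj < ls.length := by omega
  set t := ls.getD jj 0 with htdef
  have htS : t ∈ S := by
    rw [htdef, List.getD_eq_getElem ls 0 hjj']
    have := List.getElem_mem hjj'
    rwa [← Finset.mem_sort (α := ℕ) (· ≤ ·)]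
  have hj : (S.filter (· ≤ t)).card = jj + 1 := by
    have := H3 (Finset.sortedLT_sort S).pairwise hjj'
    rwa [Finset.sort_toFinset] at this
  have hgt := hg t htS
  rw [hj] at hgt
  have htn : t ≤ n := (Finset.mem_Icc.1 (hS htS)).2
  have hcount : ((Finset.Icc 1 n \ S).filter (· < t)).card = t - (jj + 1) := by
    rw [count_lt hS htS, hj]
  have hcle : ((Finset.Icc 1 n \ S).filter (· < t)).card ≤ (Finset.Icc 1 n \ S).card :=
    Finset.card_filter_le _ _
  rw [Finset.card_sdiff_of_subset hS, Nat.card_Icc] at hcle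
  have hlen : jj + 2 ≤ n - S.card := by omega
  refine ⟨hlen, ?_⟩
  intro m hm
  by_contra hcon
  push_neg at hcon
  have hmlen : m < lc.length := by omega
  have := H2 (Finset.sortedLT_sort _).pairwise hmlen hcon
  rw [Finset.sort_toFinset] at this
  omega

def bσ (n : ℕ) (S : Finset ℕ) : ℕ → ℕ := fun i =>
  if i % 2 = 0 ∧ i ≤ 2 * S.card then (S.sort (· ≤ ·)).getD (i / 2 - 1) 0
  else ((Finset.Icc 1 n \ S).sort (· ≤ ·)).getD
    (if i ≤ 2 * S.card then i / 2 else i - S.card - 1) 0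

lemma bσ_even {n : ℕ} {S : Finset ℕ} {j : ℕ} (h1 : 1 ≤ j) (h2 : j ≤ S.card) :
    bσ n S (2 * j) = (S.sort (· ≤ ·)).getD (j - 1) 0 := by
  rw [bσ]
  rw [if_pos ⟨by omega, by omega⟩]
  congr 1
  omega

lemma bσ_odd {n : ℕ} {S : Finset ℕ} {j : ℕ} (h2 : j ≤ S.card) :
    bσ n S (2 * j + 1) = ((Finset.Icc 1 n \ S).sort (· ≤ ·)).getD j 0 := by
  rw [bσ]
  rw [if_neg (by omega)]
  congr 1
  split_ifs <;> omega

lemma bσ_tail {n : ℕ} {S : Finset ℕ} {i : ℕ} (h : 2 * S.card < i) :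
    bσ n S i = ((Finset.Icc 1 n \ S).sort (· ≤ ·)).getD (i - S.card - 1) 0 := by
  rw [bσ]
  rw [if_neg (by omega)]
  congr 1
  rw [if_neg (by omega)]


lemma getD_lt_getD {l : List ℕ} (hs : l.Pairwise (· < ·)) {a b : ℕ} (hab : a < b)
    (hb : b < l.length) : l.getD a 0 < l.getD b 0 := by
  rw [List.getD_eq_getElem l 0 (lt_trans hab hb), List.getD_eq_getElem l 0 hb]
  exact sorted_getElem_lt hs hab hb

lemma getD_inj {l : List ℕ} (hnd : l.Nodup) {a b : ℕ} (ha : a < l.length) (hb : b < l.length)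
    (h : l.getD a 0 = l.getD b 0) : a = b := by
  rw [List.getD_eq_getElem l 0 ha, List.getD_eq_getElem l 0 hb] at h
  exact (List.Nodup.getElem_inj_iff hnd).1 h

lemma sufficiency {n : ℕ} {S : Finset ℕ} (hS : S ⊆ Finset.Icc 1 n) (hg : GoodCond S) :
    IsPermOn n (bσ n S) ∧ CP n (bσ n S) = S := by
  classical
  have hlsl : (S.sort (· ≤ ·)).length = S.card := Finset.length_sort _
  have hlcl : ((Finset.Icc 1 n \ S).sort (· ≤ ·)).length = n - S.card := lc_length hS
  have hkn : S.card ≤ n := by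
    have := Finset.card_le_card hS
    rwa [Nat.card_Icc, Nat.add_sub_cancel] at this
  have h2k : 1 ≤ S.card → 2 * S.card < n := by
    intro h1
    have := (key_facts hS hg (jj := S.card - 1) (by omega)).1
    omega
  have hlsnd : (S.sort (· ≤ ·)).Nodup := (Finset.sortedLT_sort S).pairwise.nodup
  have hlcnd : ((Finset.Icc 1 n \ S).sort (· ≤ ·)).Nodup := (Finset.sortedLT_sort _).pairwise.nodup
  have valS : ∀ jj, jj < S.card → (S.sort (· ≤ ·)).getD jj 0 ∈ S := by
    intro jj hjj
    have hjj' : jj < (S.sort (· ≤ ·)).length := by omega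
    rw [List.getD_eq_getElem _ 0 hjj']
    have := List.getElem_mem hjj'
    rwa [← Finset.mem_sort (α := ℕ) (· ≤ ·)]
  have valC : ∀ m, m < n - S.card →
      ((Finset.Icc 1 n \ S).sort (· ≤ ·)).getD m 0 ∈ Finset.Icc 1 n \ S := by
    intro m hm
    have hm' : m < ((Finset.Icc 1 n \ S).sort (· ≤ ·)).length := by omega
    rw [List.getD_eq_getElem _ 0 hm']
    have := List.getElem_mem hm'
    rwa [← Finset.mem_sort (α := ℕ) (· ≤ ·)]
  have hbranchS : ∀ i, 1 ≤ i → i % 2 = 0 → i ≤ 2 * S.card →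
      bσ n S i = (S.sort (· ≤ ·)).getD (i / 2 - 1) 0 ∧ i / 2 - 1 < S.card := by
    intro i h1 h2 h3
    have hi : i = 2 * (i / 2) := by omega
    refine ⟨?_, by omega⟩
    rw [hi, bσ_even (by omega) (by omega)]
    congr 1 <;> omega
  have hbranchC : ∀ i, 1 ≤ i → i ≤ n → ¬(i % 2 = 0 ∧ i ≤ 2 * S.card) →
      bσ n S i = ((Finset.Icc 1 n \ S).sort (· ≤ ·)).getD
        (if i ≤ 2 * S.card then i / 2 else i - S.card - 1) 0 ∧
      (if i ≤ 2 * S.card then i / 2 else i - S.card - 1) < n - S.card := by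
    intro i h1 h2 h3
    push_neg at h3
    by_cases hle : i ≤ 2 * S.card
    · have hodd : i % 2 = 1 := by omega
      have hi : i = 2 * (i / 2) + 1 := by omega
      rw [if_pos hle]
      constructor
      · rw [hi, bσ_odd (by omega)]
        congr 1 <;> omega
      · have := h2k (by omega)
        omega
    · push_neg at hle
      rw [if_neg (by omega)]
      exact ⟨bσ_tail (by omega), by omega⟩
  have hinj : Set.InjOn (bσ n S) (Set.Icc 1 n) := by
    intro i₁ hi₁ i₂ hi₂ heq
    simp only [Set.mem_Icc] at hi₁ hi₂
    by_cases c₁ : i₁ % 2 = 0 ∧ i₁ ≤ 2 * S.card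
      <;> by_cases c₂ : i₂ % 2 = 0 ∧ i₂ ≤ 2 * S.card
    · obtain ⟨hv₁, hd₁⟩ := hbranchS i₁ hi₁.1 c₁.1 c₁.2
      obtain ⟨hv₂, hd₂⟩ := hbranchS i₂ hi₂.1 c₂.1 c₂.2
      rw [hv₁, hv₂] at heq
      have := getD_inj hlsnd (by omega) (by omega) heq
      obtain ⟨e₁, f₁⟩ := c₁
      obtain ⟨e₂, f₂⟩ := c₂
      omega
    · obtain ⟨hv₁, hd₁⟩ := hbranchS i₁ hi₁.1 c₁.1 c₁.2
      obtain ⟨hv₂, hd₂⟩ := hbranchC i₂ hi₂.1 hi₂.2 c₂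
      exfalso
      have m₁ : bσ n S i₁ ∈ S := hv₁ ▸ valS _ hd₁
      have m₂ : bσ n S i₂ ∈ Finset.Icc 1 n \ S := hv₂ ▸ valC _ hd₂
      rw [Finset.mem_sdiff] at m₂
      rw [heq] at m₁
      exact m₂.2 m₁
    · obtain ⟨hv₁, hd₁⟩ := hbranchC i₁ hi₁.1 hi₁.2 c₁
      obtain ⟨hv₂, hd₂⟩ := hbranchS i₂ hi₂.1 c₂.1 c₂.2
      exfalso
      have m₂ : bσ n S i₂ ∈ S := hv₂ ▸ valS _ hd₂
      have m₁ : bσ n S i₁ ∈ Finset.Icc 1 n \ S := hv₁ ▸ valC _ hd₁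
      rw [Finset.mem_sdiff] at m₁
      rw [heq] at m₁
      exact m₁.2 m₂
    · obtain ⟨hv₁, hd₁⟩ := hbranchC i₁ hi₁.1 hi₁.2 c₁
      obtain ⟨hv₂, hd₂⟩ := hbranchC i₂ hi₂.1 hi₂.2 c₂
      rw [hv₁, hv₂] at heq
      have hidx := getD_inj hlcnd (by omega) (by omega) heq
      push_neg at c₁ c₂
      split_ifs at hidx with a₁ a₂ a₂
      · have o₁ : i₁ % 2 = 1 := by omega
        have o₂ : i₂ % 2 = 1 := by omega
        omega
      · have o₁ : i₁ % 2 = 1 := by omega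
        push_neg at a₂
        omega
      · have o₂ : i₂ % 2 = 1 := by omega
        push_neg at a₁
        omega
      · omega
  have hmaps : ∀ i, 1 ≤ i → i ≤ n → bσ n S i ∈ Finset.Icc 1 n := by
    intro i h1 h2
    by_cases c : i % 2 = 0 ∧ i ≤ 2 * S.card
    · obtain ⟨hv, hd⟩ := hbranchS i h1 c.1 c.2
      exact hS (hv ▸ valS _ hd)
    · obtain ⟨hv, hd⟩ := hbranchC i h1 h2 c
      have := hv ▸ valC _ hd
      exact (Finset.mem_sdiff.1 this).1
  have himg : (Finset.Icc 1 n).image (bσ n S) = Finset.Icc 1 n := by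
    apply Finset.eq_of_subset_of_card_le
    · intro y hy
      rw [Finset.mem_image] at hy
      obtain ⟨i, hi, rfl⟩ := hy
      rw [Finset.mem_Icc] at hi
      exact hmaps i hi.1 hi.2
    · rw [Finset.card_image_of_injOn]
      intro a ha b hb hab
      rw [Finset.coe_Icc] at ha hb
      exact hinj ha hb hab
  have hperm : IsPermOn n (bσ n S) := by
    refine ⟨?_, hinj, ?_⟩
    · intro i hi
      rw [Set.mem_Icc] at hi
      have := hmaps i hi.1 hi.2
      rw [Finset.mem_Icc] at this
      exact this
    · intro y hy
      rw [Set.mem_Icc] at hy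
      have : y ∈ Finset.Icc 1 n := Finset.mem_Icc.2 hy
      rw [← himg, Finset.mem_image] at this
      obtain ⟨i, hi, rfl⟩ := this
      rw [Finset.mem_Icc] at hi
      exact ⟨i, Set.mem_Icc.2 hi, rfl⟩
  refine ⟨hperm, ?_⟩
  have hPk : (Finset.Icc 2 (n - 1)).filter
      (fun i => bσ n S (i - 1) < bσ n S i ∧ bσ n S (i + 1) < bσ n S i)
      = (Finset.Icc 1 S.card).image (fun j => 2 * j) := by
    ext i
    simp only [Finset.mem_filter, Finset.mem_image, Finset.mem_Icc]
    constructor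
    · rintro ⟨⟨hi2, hin⟩, hpk⟩
      have hn3 : 3 ≤ n := by omega
      by_cases c : i % 2 = 0 ∧ i ≤ 2 * S.card
      · exact ⟨i / 2, ⟨by omega, by omega⟩, by omega⟩
      · exfalso
        push_neg at c
        by_cases hle : i ≤ 2 * S.card
        · have hodd : i % 2 = 1 := by omega
          have hij : i = 2 * (i / 2) + 1 := by omega
          have hv : bσ n S i = ((Finset.Icc 1 n \ S).sort (· ≤ ·)).getD (i / 2) 0 := by
            rw [hij, bσ_odd (by omega)]
            congr 1 <;> omega
          have hv' : bσ n S (i + 1) = (S.sort (· ≤ ·)).getD (i / 2) 0 := by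
            have h2 : i + 1 = 2 * (i / 2 + 1) := by omega
            rw [h2, bσ_even (by omega) (by omega)]
            congr 1 <;> omega
          have hklt := (key_facts hS hg (jj := i / 2) (by omega)).2 (i / 2) (by omega)
          rw [hv, hv'] at hpk
          omega
        · push_neg at hle
          have hv : bσ n S i = ((Finset.Icc 1 n \ S).sort (· ≤ ·)).getD (i - S.card - 1) 0 :=
            bσ_tail (by omega)
          have hv' : bσ n S (i + 1) = ((Finset.Icc 1 n \ S).sort (· ≤ ·)).getD (i - S.card) 0 := by
            rw [bσ_tail (by omega)]
            congr 1 <;> omega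
          have hlt : ((Finset.Icc 1 n \ S).sort (· ≤ ·)).getD (i - S.card - 1) 0
              < ((Finset.Icc 1 n \ S).sort (· ≤ ·)).getD (i - S.card) 0 :=
            getD_lt_getD (Finset.sortedLT_sort _).pairwise (by omega) (by omega)
          rw [hv, hv'] at hpk
          omega
    · rintro ⟨j, hj, rfl⟩
      have hkn' := h2k (by omega)
      have hL : bσ n S (2 * j - 1) = ((Finset.Icc 1 n \ S).sort (· ≤ ·)).getD (j - 1) 0 := by
        have h2 : 2 * j - 1 = 2 * (j - 1) + 1 := by omega
        rw [h2, bσ_odd (by omega)]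
      have hM : bσ n S (2 * j) = (S.sort (· ≤ ·)).getD (j - 1) 0 := bσ_even hj.1 hj.2
      have hR : bσ n S (2 * j + 1) = ((Finset.Icc 1 n \ S).sort (· ≤ ·)).getD j 0 := bσ_odd hj.2
      have hkf := (key_facts hS hg (jj := j - 1) (by omega)).2
      have h1 : ((Finset.Icc 1 n \ S).sort (· ≤ ·)).getD (j - 1) 0
          < (S.sort (· ≤ ·)).getD (j - 1) 0 := hkf (j - 1) (by omega)
      have h2 : ((Finset.Icc 1 n \ S).sort (· ≤ ·)).getD j 0
          < (S.sort (· ≤ ·)).getD (j - 1) 0 := hkf j (by omega)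
      refine ⟨⟨by omega, by omega⟩, ?_, ?_⟩
      · rw [hL, hM]; exact h1
      · rw [hR, hM]; exact h2
  rw [CP, hPk, Finset.image_image]
  have hvals : Set.EqOn (bσ n S ∘ fun j => 2 * j) (fun j => (S.sort (· ≤ ·)).getD (j - 1) 0)
      ↑(Finset.Icc 1 S.card) := by
    intro j hj
    simp only [Finset.coe_Icc, Set.mem_Icc] at hj
    exact bσ_even hj.1 hj.2
  rw [Finset.image_congr hvals]
  apply Finset.eq_of_subset_of_card_le
  · intro y hy
    rw [Finset.mem_image] at hy
    obtain ⟨j, hj, rfl⟩ := hy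
    rw [Finset.mem_Icc] at hj
    exact valS (j - 1) (by omega)
  · rw [Finset.card_image_of_injOn]
    · rw [Nat.card_Icc]
      omega
    · intro a ha b hb hab
      simp only [Finset.coe_Icc, Set.mem_Icc] at ha hb
      have hab' : (S.sort (· ≤ ·)).getD (a - 1) 0 = (S.sort (· ≤ ·)).getD (b - 1) 0 := hab
      have := getD_inj hlsnd (by omega) (by omega) hab'
      omega


lemma necessity {n : ℕ} {σ : ℕ → ℕ} (hσ : IsPermOn n σ) {t : ℕ} (ht : t ∈ CP n σ) :
    2 * ((CP n σ).filter (· ≤ t)).card < t := by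
  classical
  set Pk := (Finset.Icc 2 (n - 1)).filter (fun i => σ (i - 1) < σ i ∧ σ (i + 1) < σ i) with hPk
  have hPkIcc : ∀ a ∈ Pk, 2 ≤ a ∧ a ≤ n - 1 ∧ σ (a-1) < σ a ∧ σ (a+1) < σ a := by
    intro a ha
    simp only [hPk, mem_filter, Finset.mem_Icc] at ha
    exact ⟨ha.1.1, ha.1.2, ha.2.1, ha.2.2⟩
  have hsub : ∀ a ∈ Pk, a ∈ Set.Icc 1 n := by
    intro a ha
    obtain ⟨h2, h1, -⟩ := hPkIcc a ha
    exact ⟨le_trans one_le_two h2, le_trans h1 (Nat.sub_le n 1)⟩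
  have hinj : Set.InjOn σ (Set.Icc 1 n) := hσ.injOn
  set A := Pk.filter (fun i => σ i ≤ t) with hA
  have hAsub : ∀ a ∈ A, a ∈ Set.Icc 1 n := fun a ha => hsub a (mem_of_mem_filter a ha)
  have hAPk : ∀ a ∈ A, 2 ≤ a ∧ a ≤ n - 1 ∧ σ (a-1) < σ a ∧ σ (a+1) < σ a ∧ σ a ≤ t := by
    intro a ha
    rw [hA, mem_filter] at ha
    obtain ⟨h1, h2, h3, h4⟩ := hPkIcc a ha.1
    exact ⟨h1, h2, h3, h4, ha.2⟩
  -- filter card = card A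
  have hfilt : (CP n σ).filter (· ≤ t) = A.image σ := by
    rw [CP, filter_image]
  have hcardA : ((CP n σ).filter (· ≤ t)).card = A.card := by
    rw [hfilt]
    apply Finset.card_image_of_injOn
    exact hinj.mono (fun a ha => hAsub a ha)
  -- A nonempty
  have hAne : A.Nonempty := by
    rw [CP, Finset.mem_image] at ht
    obtain ⟨i, hi, hit⟩ := ht
    exact ⟨i, by rw [hA, mem_filter]; exact ⟨hi, le_of_eq hit⟩⟩
  set a0 := A.min' hAne with ha0
  have ha0A : a0 ∈ A := A.min'_mem hAne
  have ha02 : 2 ≤ a0 := (hAPk a0 ha0A).1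
  set N := insert (a0 - 1) (A.image (· + 1)) with hN
  have hNcard : N.card = A.card + 1 := by
    rw [hN, Finset.card_insert_of_notMem, Finset.card_image_of_injective _ (add_left_injective 1)]
    intro hmem
    rw [Finset.mem_image] at hmem
    obtain ⟨a, haA, hae⟩ := hmem
    have := A.min'_le a haA
    omega
  have hdisj : Disjoint A N := by
    rw [Finset.disjoint_right]
    intro x hx hxA
    rw [hN, Finset.mem_insert, Finset.mem_image] at hx
    rcases hx with hx | ⟨a, haA, rfl⟩
    · have := A.min'_le x hxA
      omega
    · obtain ⟨-, -, -, h4, -⟩ := hAPk a haA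
      obtain ⟨-, -, h3', -, -⟩ := hAPk (a+1) hxA
      simp only [Nat.add_sub_cancel] at h3'
      exact absurd h4 (not_lt.2 (le_of_lt h3'))
  have hNsub : ∀ x ∈ N, x ∈ Set.Icc 1 n := by
    intro x hx
    rw [hN, Finset.mem_insert, Finset.mem_image] at hx
    rcases hx with rfl | ⟨a, haA, rfl⟩
    · obtain ⟨h2, h1, -⟩ := hAPk a0 ha0A
      constructor <;> omega
    · obtain ⟨h2, h1, -⟩ := hAPk a haA
      constructor <;> omega
  have hNval : ∀ x ∈ N, σ x < t := by
    intro x hx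
    rw [hN, Finset.mem_insert, Finset.mem_image] at hx
    rcases hx with rfl | ⟨a, haA, rfl⟩
    · obtain ⟨h2, h1, h3, h4, h5⟩ := hAPk a0 ha0A
      exact lt_of_lt_of_le h3 h5
    · obtain ⟨h2, h1, h3, h4, h5⟩ := hAPk a haA
      exact lt_of_lt_of_le h4 h5
  set B := A ∪ N with hB
  have hBsub : ∀ x ∈ B, x ∈ Set.Icc 1 n := by
    intro x hx
    rw [hB, Finset.mem_union] at hx
    rcases hx with hx | hx
    · exact hAsub x hx
    · exact hNsub x hx
  have hBcard : B.card = 2 * A.card + 1 := by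
    rw [hB, Finset.card_union_of_disjoint hdisj, hNcard]; ring
  have himg : (B.image σ) ⊆ Finset.Icc 1 t := by
    intro y hy
    rw [Finset.mem_image] at hy
    obtain ⟨x, hx, rfl⟩ := hy
    have h1 : σ x ∈ Set.Icc 1 n := hσ.mapsTo (hBsub x hx)
    rw [hB, Finset.mem_union] at hx
    rw [Finset.mem_Icc]
    rcases hx with hx | hx
    · exact ⟨h1.1, (hAPk x hx).2.2.2.2⟩
    · exact ⟨h1.1, le_of_lt (hNval x hx)⟩
  have hcardB : (B.image σ).card = B.card :=
    Finset.card_image_of_injOn (hinj.mono (fun x hx => hBsub x hx))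
  have := Finset.card_le_card himg
  rw [hcardB, hBcard, Nat.card_Icc] at this
  omega


lemma sufficiency' {n : ℕ} {S : Finset ℕ} (hS : S ⊆ Finset.Icc 1 n) (hg : GoodCond S) :
    ∃ σ : ℕ → ℕ, IsPermOn n σ ∧ CP n σ = S :=
  ⟨bσ n S, (sufficiency hS hg).1, (sufficiency hS hg).2⟩

lemma mem_Pn_iff {n : ℕ} {S : Finset ℕ} :
    S ∈ Pn n ↔ S ⊆ Finset.Icc 1 n ∧ GoodCond S := by
  classical
  rw [Pn, Finset.mem_filter, Finset.mem_powerset]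
  constructor
  · rintro ⟨hsub, σ, hσ, rfl⟩
    exact ⟨hsub, fun t ht => necessity hσ ht⟩
  · rintro ⟨hsub, hg⟩
    exact ⟨hsub, sufficiency' hsub hg⟩

open scoped Classical in
noncomputable def gcount (n k : ℕ) : ℕ :=
  ((Finset.Icc 1 n).powerset.filter (fun S => GoodCond S ∧ S.card = k)).card

lemma pcount_eq_gcount (n k : ℕ) : pcount n k = gcount n k := by
  classical
  rw [pcount, gcount]
  congr 1
  ext S
  simp only [Finset.mem_filter, Finset.mem_powerset, mem_Pn_iff]
  tauto

lemma gcount_zero {n k : ℕ} (hk : 1 ≤ k) (hnk : n ≤ 2 * k) : gcount n k = 0 := by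
  classical
  rw [gcount, Finset.card_eq_zero, Finset.filter_eq_empty_iff]
  rintro S hSp ⟨hg, hcard⟩
  rw [Finset.mem_powerset] at hSp
  have hne : S.Nonempty := by
    rw [← Finset.card_pos, hcard]; omega
  set t := S.max' hne with htdef
  have htS : t ∈ S := S.max'_mem hne
  have hfilt : S.filter (· ≤ t) = S := by
    apply Finset.filter_true_of_mem
    intro x hx
    exact S.le_max' x hx
  have := hg t htS
  rw [hfilt, hcard] at this
  have htn : t ≤ n := (Finset.mem_Icc.1 (hSp htS)).2
  omega

lemma gcount_zero' (n : ℕ) : gcount n 0 = 1 := by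
  classical
  rw [gcount]
  have : ((Finset.Icc 1 n).powerset.filter (fun S => GoodCond S ∧ S.card = 0)) = {∅} := by
    ext S
    simp only [Finset.mem_filter, Finset.mem_powerset, Finset.mem_singleton,
      Finset.card_eq_zero]
    constructor
    · rintro ⟨-, -, h⟩; exact h
    · rintro rfl
      refine ⟨Finset.empty_subset _, ?_, rfl⟩
      intro t ht
      exact absurd ht (Finset.notMem_empty t)
  rw [this, Finset.card_singleton]

lemma gcount_rec {n k : ℕ} (hn : 4 ≤ n) (hev : Even n) :
    gcount (n + 1) (k + 1) = gcount n (k + 1) + gcount n k := by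
  classical
  by_cases hbig : n ≤ 2 * k + 1
  · obtain ⟨m, rfl⟩ := hev
    have hm : m + m = 2 * m := by ring
    rw [gcount_zero (by omega) (by omega), gcount_zero (by omega) (by omega),
      gcount_zero (by omega) (by omega)]
  push_neg at hbig
  -- 2k + 2 ≤ n
  rw [gcount]
  rw [← Finset.card_filter_add_card_filter_not (s :=
    ((Finset.Icc 1 (n+1)).powerset.filter (fun S => GoodCond S ∧ S.card = k + 1)))
    (fun S => n + 1 ∈ S)]
  have h1 : (((Finset.Icc 1 (n+1)).powerset.filter (fun S => GoodCond S ∧ S.card = k + 1)).filter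
      (fun S => ¬ n + 1 ∈ S)) =
      ((Finset.Icc 1 n).powerset.filter (fun S => GoodCond S ∧ S.card = k + 1)) := by
    ext S
    simp only [Finset.mem_filter, Finset.mem_powerset]
    constructor
    · rintro ⟨⟨hsub, hg, hc⟩, hnm⟩
      refine ⟨?_, hg, hc⟩
      intro x hx
      have := hsub hx
      rw [Finset.mem_Icc] at *
      have : x ≠ n + 1 := fun h => hnm (h ▸ hx)
      constructor <;> omega
    · rintro ⟨hsub, hg, hc⟩
      have hnm : n + 1 ∉ S := by
        intro h
        have := hsub h
        rw [Finset.mem_Icc] at this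
        omega
      refine ⟨⟨?_, hg, hc⟩, hnm⟩
      intro x hx
      have := hsub hx
      rw [Finset.mem_Icc] at *
      constructor <;> omega
  have h2 : (((Finset.Icc 1 (n+1)).powerset.filter (fun S => GoodCond S ∧ S.card = k + 1)).filter
      (fun S => n + 1 ∈ S)).card =
      ((Finset.Icc 1 n).powerset.filter (fun S => GoodCond S ∧ S.card = k)).card := by
    apply Finset.card_bij' (i := fun S _ => S.erase (n + 1)) (j := fun T _ => insert (n + 1) T)
    · intro S hS
      simp only [Finset.mem_filter] at hS
      exact Finset.insert_erase hS.2
    · intro T hT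
      simp only [Finset.mem_filter, Finset.mem_powerset] at hT
      apply Finset.erase_insert
      intro h
      have := hT.1 h
      rw [Finset.mem_Icc] at this
      omega
  
    · intro S hS
      simp only [Finset.mem_filter, Finset.mem_powerset] at hS
      obtain ⟨⟨hsub, hg, hc⟩, hmem⟩ := hS
      simp only [Finset.mem_filter, Finset.mem_powerset]
      refine ⟨?_, ?_, ?_⟩
      · intro x hx
        rw [Finset.mem_erase] at hx
        have := hsub hx.2
        rw [Finset.mem_Icc] at *
        have := hx.1
        constructor <;> omega
      · intro t ht
        rw [Finset.mem_erase] at ht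
        have hgt := hg t ht.2
        have hsub2 : (S.erase (n+1)).filter (· ≤ t) ⊆ S.filter (· ≤ t) :=
          Finset.filter_subset_filter _ (Finset.erase_subset _ _)
        have := Finset.card_le_card hsub2
        omega
      · rw [Finset.card_erase_of_mem hmem, hc]
        omega
    · intro T hT  -- hj
      simp only [Finset.mem_filter, Finset.mem_powerset] at hT
      obtain ⟨hsub, hg, hc⟩ := hT
      have hnm : n + 1 ∉ T := by
        intro h
        have := hsub h
        rw [Finset.mem_Icc] at this
        omega
      simp only [Finset.mem_filter, Finset.mem_powerset]
      refine ⟨⟨?_, ?_, ?_⟩, Finset.mem_insert_self _ _⟩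
      · intro x hx
        rw [Finset.mem_insert] at hx
        rcases hx with rfl | hx
        · rw [Finset.mem_Icc]; omega
        · have := hsub hx
          rw [Finset.mem_Icc] at *
          constructor <;> omega
      · intro t ht
        rw [Finset.mem_insert] at ht
        rcases ht with rfl | ht
        · have hfilt : (insert (n+1) T).filter (· ≤ n+1) = insert (n+1) T := by
            apply Finset.filter_true_of_mem
            intro x hx
            rw [Finset.mem_insert] at hx
            rcases hx with rfl | hx
            · exact le_refl _
            · have := hsub hx
              rw [Finset.mem_Icc] at this
              omega
          rw [hfilt, Finset.card_insert_of_notMem hnm, hc]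
          omega
        · have htn : t ≤ n := (Finset.mem_Icc.1 (hsub ht)).2
          have hfilt : (insert (n+1) T).filter (· ≤ t) = T.filter (· ≤ t) := by
            rw [Finset.filter_insert, if_neg (by omega)]
          rw [hfilt]
          exact hg t ht
      · rw [Finset.card_insert_of_notMem hnm, hc]
  rw [h1, h2, add_comm]
  rfl

theorem fpoly_recurrence_even (n : ℕ) (hn : 4 ≤ n) (hev : Even n) :
    fpoly (n + 1) = (1 + Polynomial.X) * fpoly n := by
  classical
  obtain ⟨m, hm⟩ := hev
  have hmn : n = 2 * m := by omega
  have hm2 : 2 ≤ m := by omega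
  have e1 : (n + 1 - 1) / 2 = m := by omega
  have e2 : (n - 1) / 2 = m - 1 := by omega
  have hpc : ∀ i, pcount (n + 1) (i + 1) = pcount n (i + 1) + pcount n i := by
    intro i
    rw [pcount_eq_gcount, pcount_eq_gcount, pcount_eq_gcount]
    exact gcount_rec hn ⟨m, hm⟩
  have hpc0 : pcount (n + 1) 0 = pcount n 0 := by
    rw [pcount_eq_gcount, pcount_eq_gcount, gcount_zero', gcount_zero']
  have hpm : pcount n m = 0 := by
    rw [pcount_eq_gcount]
    exact gcount_zero (by omega) (by omega)
  rw [fpoly, fpoly, e1, e2]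
  have hsplit : ∀ i ∈ Finset.range (m + 1),
      Polynomial.C ((pcount (n+1) i : ℚ)) * Polynomial.X ^ (m - i) =
      (Polynomial.C ((pcount n i : ℚ)) * Polynomial.X ^ (m - i)) +
      (if i = 0 then 0 else Polynomial.C ((pcount n (i-1) : ℚ)) * Polynomial.X ^ (m - i)) := by
    intro i _
    rcases Nat.eq_zero_or_pos i with rfl | hi
    · rw [if_pos rfl, hpc0, add_zero]
    · rw [if_neg (by omega)]
      have : i = (i - 1) + 1 := by omega
      rw [this, hpc (i - 1)]
      push_cast
      rw [Polynomial.C_add, add_mul]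
  rw [Finset.sum_congr rfl hsplit, Finset.sum_add_distrib]
  have hA : ∑ i ∈ Finset.range (m + 1), Polynomial.C ((pcount n i : ℚ)) * Polynomial.X ^ (m - i)
      = ∑ i ∈ Finset.range (m - 1 + 1), Polynomial.C ((pcount n i : ℚ)) *
        Polynomial.X ^ (m - i) := by
    have hm1 : m + 1 = (m - 1 + 1) + 1 := by omega
    rw [hm1, Finset.sum_range_succ]
    have : (m - 1 + 1) = m := by omega
    rw [this, hpm]
    norm_num
  have hB : ∑ i ∈ Finset.range (m + 1),
      (if i = 0 then 0 else Polynomial.C ((pcount n (i-1) : ℚ)) * Polynomial.X ^ (m - i))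
      = ∑ i ∈ Finset.range (m - 1 + 1), Polynomial.C ((pcount n i : ℚ)) *
        (Polynomial.X ^ (m - 1 - i)) := by
    rw [Finset.sum_range_succ']
    rw [if_pos rfl, add_zero]
    apply Finset.sum_congr (by rw [Nat.sub_add_cancel (by omega : 1 ≤ m)])
    intro i hi
    rw [Finset.mem_range] at hi
    rw [if_neg (Nat.succ_ne_zero i), Nat.add_sub_cancel,
      (by omega : m - (i + 1) = m - 1 - i)]
  rw [hA, hB, add_mul, one_mul, Finset.mul_sum]
  have hC : ∀ i ∈ Finset.range (m - 1 + 1),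
      Polynomial.X * (Polynomial.C ((pcount n i : ℚ)) * Polynomial.X ^ (m - 1 - i)) =
      Polynomial.C ((pcount n i : ℚ)) * Polynomial.X ^ (m - i) := by
    intro i hi
    rw [Finset.mem_range] at hi
    have : m - i = (m - 1 - i) + 1 := by omega
    rw [this, pow_succ]
    ring
  rw [Finset.sum_congr rfl hC]
  ring
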